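/- Conversely, if two MV-logistic parameterizations (γ, α, β) and (γ', α', β') with αβ^T ≠ 0 induce the same conditional probability function P(Y=1|X) for all p×q matrices X, then γ = γ' and α'β'^T = αβ^T, i.e., the outer product matrix and intercept are identified. -/

import Mathlib

open Matrix

noncomputable def logistic (t : ℝ) : ℝ := Real.exp t / (1 + Real.exp t)

lemma logistic_inj {a b : ℝ} (h : logistic a = logistic b) : a = b := by
  unfold logistic at h
  have ha : (0:ℝ) < 1 + Real.exp a := by positivity
  have hb : (0:ℝ) < 1 + Real.exp b := by positivity
  have : Real.exp a * (1 + Real.exp b) = Real.exp b * (1 + Real.exp a) := by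
    field_simp at h; linarith
  have : Real.exp a = Real.exp b := by ring_nf at this; nlinarith
  exact Real.exp_injective this

/-- If two MV-logistic parameterizations with αβ^T ≠ 0 induce the same
conditional probability for every X, then the intercept and the outer
product matrix are identified. -/
theorem mvlogistic_identifiability (p q : ℕ)
    (γ γ' : ℝ) (α α' : Fin p → ℝ) (β β' : Fin q → ℝ)
    (hne : Matrix.vecMulVec α β ≠ 0)
    (h : ∀ X : Matrix (Fin p) (Fin q) ℝ,
      logistic (γ + α ⬝ᵥ X.mulVec β) = logistic (γ' + α' ⬝ᵥ X.mulVec β')) :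
    γ = γ' ∧ Matrix.vecMulVec α' β' = Matrix.vecMulVec α β := by
  have key : ∀ X : Matrix (Fin p) (Fin q) ℝ,
      γ + α ⬝ᵥ X.mulVec β = γ' + α' ⬝ᵥ X.mulVec β' := fun X => logistic_inj (h X)
  have hγ : γ = γ' := by
    have := key 0
    simpa using this
  refine ⟨hγ, ?_⟩
  ext i j
  have hX := key (Matrix.single i j 1)
  have hmv : ∀ (v : Fin q → ℝ) (u : Fin p → ℝ),
      u ⬝ᵥ (Matrix.single i j 1).mulVec v = u i * v j := by
    intro v u
    simp only [Matrix.mulVec, dotProduct, Matrix.single, Matrix.of_apply]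
    rw [Finset.sum_eq_single i]
    · simp [Finset.sum_ite_eq', mul_comm]
    · intro b _ hb
      have : ∀ x : Fin q, ¬(i = b ∧ j = x) := fun x hx => hb hx.1.symm
      simp [this]
    · simp
  rw [hmv, hmv, hγ] at hX
  simp only [Matrix.vecMulVec_apply]
  linarith
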